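/- Let N be a positive integer, κ₁ > 0 and κ₂ ∈ (−1/2, 1/2) real parameters, and let κ be the near-axis curvature model. Then κ(0) = 0, κ(π/N) = 0, κ(ℓ) > 0 for every ℓ ∈ (0, π/N), and κ has exactly one critical point ℓ* in the open interval (0, π/N); this ℓ* is the unique point of (the compact interval) [0, π/N] at which κ attains its maximum over [0, π/N]. -/

import Mathlib

open Real Set

private lemma quad_unique (κ₂ v₁ v₂ : ℝ) (h₂l : -(1/2:ℝ) < κ₂) (h₂r : κ₂ < 1/2)
    (hv₁ : 0 < v₁) (hv₁' : v₁ < 1) (hv₂ : 0 < v₂) (hv₂' : v₂ < 1)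
    (h1 : 3*(1-2*κ₂) + (30*κ₂-5)*v₁ - 28*κ₂*v₁^2 = 0)
    (h2 : 3*(1-2*κ₂) + (30*κ₂-5)*v₂ - 28*κ₂*v₂^2 = 0) : v₁ = v₂ := by
  by_contra hne
  have hd : (v₁ - v₂) * (30*κ₂ - 5 - 28*κ₂*(v₁+v₂)) = 0 := by linear_combination h1 - h2
  have hb : 30*κ₂ - 5 - 28*κ₂*(v₁+v₂) = 0 :=
    (mul_eq_zero.mp hd).resolve_left (sub_ne_zero.mpr hne)
  have hc : 3*(1-2*κ₂) + 28*κ₂*(v₁*v₂) = 0 := by linear_combination h1 - v₁*hb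
  have hneg : κ₂ < 0 := by nlinarith [mul_pos hv₁ hv₂]
  have hg1 : (-2:ℝ) - 4*κ₂ + 28*κ₂*((1-v₁)*(1-v₂)) = 0 := by linear_combination hb + hc
  nlinarith [mul_pos (sub_pos.mpr hv₁') (sub_pos.mpr hv₂')]

private lemma Pderiv (κ₁ κ₂ u : ℝ) :
    HasDerivAt (fun u : ℝ => 2*κ₁*(1-u^2)*u^3*(1+2*κ₂*(2*u^2-1)))
      (2*κ₁*u^2*(3*(1-2*κ₂)+(30*κ₂-5)*u^2-28*κ₂*u^4)) u := by
  have h1 : HasDerivAt (fun u : ℝ => 2*κ₁*(1-u^2)) (2*κ₁*(-(2*u))) u := by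
    have := ((hasDerivAt_pow 2 u).const_sub 1).const_mul (2*κ₁)
    refine this.congr_deriv ?_
    push_cast; ring
  have h2 : HasDerivAt (fun u : ℝ => u^3) (3*u^2) u := by
    simpa using hasDerivAt_pow 3 u
  have h3 : HasDerivAt (fun u : ℝ => 1+2*κ₂*(2*u^2-1)) (2*κ₂*(2*(2*u))) u := by
    have := ((((hasDerivAt_pow 2 u).const_mul 2).sub_const 1).const_mul (2*κ₂)).const_add 1
    refine this.congr_deriv ?_
    push_cast; ring
  have key := (h1.mul h2).mul h3
  refine key.congr_deriv ?_
  simp only [Pi.mul_apply]; ring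

set_option maxHeartbeats 2000000 in
/-- For the near-axis curvature model
`κ(ℓ) = 2κ₁ sin²(Nℓ/2) cos³(Nℓ/2) (1 + 2κ₂ cos(Nℓ))` with `N` a positive integer,
`κ₁ > 0`, `κ₂ ∈ (−1/2, 1/2)`: κ vanishes at 0 and π/N, is positive on (0, π/N),
and has exactly one critical point ℓ* in (0, π/N), which is the unique point of
[0, π/N] where κ attains its maximum over [0, π/N]. -/
theorem near_axis_curvature_single_max
    (N : ℕ) (hN : 0 < N) (κ₁ κ₂ : ℝ) (hκ₁ : 0 < κ₁)
    (hκ₂ : κ₂ ∈ Set.Ioo (-(1/2) : ℝ) (1/2))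
    (κ : ℝ → ℝ)
    (hκ : ∀ ℓ : ℝ, κ ℓ =
      2 * κ₁ * Real.sin ((N : ℝ) * ℓ / 2) ^ 2 * Real.cos ((N : ℝ) * ℓ / 2) ^ 3 *
        (1 + 2 * κ₂ * Real.cos ((N : ℝ) * ℓ))) :
    κ 0 = 0 ∧ κ (π / (N : ℝ)) = 0 ∧
    (∀ ℓ ∈ Set.Ioo (0 : ℝ) (π / (N : ℝ)), 0 < κ ℓ) ∧
    ∃ ℓs ∈ Set.Ioo (0 : ℝ) (π / (N : ℝ)),
      deriv κ ℓs = 0 ∧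
      (∀ ℓ ∈ Set.Ioo (0 : ℝ) (π / (N : ℝ)), deriv κ ℓ = 0 → ℓ = ℓs) ∧
      IsMaxOn κ (Set.Icc (0 : ℝ) (π / (N : ℝ))) ℓs ∧
      (∀ ℓ ∈ Set.Icc (0 : ℝ) (π / (N : ℝ)),
        IsMaxOn κ (Set.Icc (0 : ℝ) (π / (N : ℝ))) ℓ → ℓ = ℓs) := by
  obtain ⟨h2l, h2r⟩ := hκ₂
  have hNpos : (0:ℝ) < (N:ℝ) := by exact_mod_cast hN
  have hNne : (N:ℝ) ≠ 0 := ne_of_gt hNpos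
  have hIpos : (0:ℝ) < π / (N:ℝ) := div_pos pi_pos hNpos
  -- κ as a polynomial in cos(Nℓ/2)
  have hκeq : κ = (fun u : ℝ => 2*κ₁*(1-u^2)*u^3*(1+2*κ₂*(2*u^2-1))) ∘
      (fun ℓ : ℝ => Real.cos ((N:ℝ)*ℓ/2)) := by
    funext ℓ
    rw [hκ]
    have hc2 : Real.cos ((N:ℝ)*ℓ) = 2*Real.cos ((N:ℝ)*ℓ/2)^2 - 1 := by
      have h := Real.cos_two_mul ((N:ℝ)*ℓ/2)
      rwa [show 2*((N:ℝ)*ℓ/2) = (N:ℝ)*ℓ by ring] at h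
    have hs2 : Real.sin ((N:ℝ)*ℓ/2)^2 = 1 - Real.cos ((N:ℝ)*ℓ/2)^2 := Real.sin_sq _
    rw [hc2, hs2]
    simp only [Function.comp_apply]
  -- derivative of κ
  have hKd : ∀ ℓ : ℝ, HasDerivAt κ
      ((2*κ₁*Real.cos ((N:ℝ)*ℓ/2)^2*(3*(1-2*κ₂)+(30*κ₂-5)*Real.cos ((N:ℝ)*ℓ/2)^2
        -28*κ₂*Real.cos ((N:ℝ)*ℓ/2)^4)) * (-Real.sin ((N:ℝ)*ℓ/2) * ((N:ℝ)/2))) ℓ := by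
    intro ℓ
    have hlin : HasDerivAt (fun ℓ : ℝ => (N:ℝ)*ℓ/2) ((N:ℝ)/2) ℓ := by
      simpa using ((hasDerivAt_id ℓ).const_mul (N:ℝ)).div_const 2
    have hcos : HasDerivAt (fun ℓ : ℝ => Real.cos ((N:ℝ)*ℓ/2))
        (-Real.sin ((N:ℝ)*ℓ/2) * ((N:ℝ)/2)) ℓ :=
      (Real.hasDerivAt_cos _).comp ℓ hlin
    rw [hκeq]
    exact (Pderiv κ₁ κ₂ _).comp ℓ hcos
  have hcont : Continuous κ := by
    rw [hκeq]; fun_prop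
  have hderiv : ∀ ℓ : ℝ, deriv κ ℓ =
      (2*κ₁*Real.cos ((N:ℝ)*ℓ/2)^2*(3*(1-2*κ₂)+(30*κ₂-5)*Real.cos ((N:ℝ)*ℓ/2)^2
        -28*κ₂*Real.cos ((N:ℝ)*ℓ/2)^4)) * (-Real.sin ((N:ℝ)*ℓ/2) * ((N:ℝ)/2)) :=
    fun ℓ => (hKd ℓ).deriv
  -- basic facts about angles in the open interval
  have hang : ∀ ℓ ∈ Set.Ioo (0:ℝ) (π/(N:ℝ)),
      0 < Real.sin ((N:ℝ)*ℓ/2) ∧ 0 < Real.cos ((N:ℝ)*ℓ/2) ∧ Real.cos ((N:ℝ)*ℓ/2) < 1 := by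
    intro ℓ ⟨hl, hr⟩
    have hθ1 : 0 < (N:ℝ)*ℓ/2 := by positivity
    have hθ2 : (N:ℝ)*ℓ/2 < π/2 := by
      have := (lt_div_iff₀ hNpos).mp hr
      nlinarith
    have hπ : π/2 < π := by linarith [pi_pos]
    refine ⟨Real.sin_pos_of_pos_of_lt_pi hθ1 (by linarith),
      Real.cos_pos_of_mem_Ioo ⟨by linarith, hθ2⟩, ?_⟩
    have := Real.cos_lt_cos_of_nonneg_of_le_pi (le_refl 0) (by linarith) hθ1
    simpa using this
  -- endpoint values
  have hK0 : κ 0 = 0 := by rw [hκ]; norm_num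
  have harg : (N:ℝ)*(π/(N:ℝ))/2 = π/2 := by field_simp
  have hKend : κ (π/(N:ℝ)) = 0 := by
    rw [hκ, harg]; simp [Real.cos_pi_div_two]
  -- positivity on the open interval
  have hpos : ∀ ℓ ∈ Set.Ioo (0:ℝ) (π/(N:ℝ)), 0 < κ ℓ := by
    intro ℓ hℓ
    obtain ⟨hs, hc, _⟩ := hang ℓ hℓ
    have hB : 0 < 1 + 2*κ₂*Real.cos ((N:ℝ)*ℓ) := by
      have hc1 := Real.neg_one_le_cos ((N:ℝ)*ℓ)
      have hc2 := Real.cos_le_one ((N:ℝ)*ℓ)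
      rcases le_or_gt 0 κ₂ with h | h
      · nlinarith [mul_nonneg h (by linarith : (0:ℝ) ≤ Real.cos ((N:ℝ)*ℓ) + 1)]
      · nlinarith [mul_nonneg (by linarith : (0:ℝ) ≤ -κ₂)
          (by linarith : (0:ℝ) ≤ 1 - Real.cos ((N:ℝ)*ℓ))]
    rw [hκ]
    have := mul_pos (mul_pos (mul_pos (by positivity : (0:ℝ) < 2*κ₁)
      (pow_pos hs 2)) (pow_pos hc 3)) hB
    linarith
  -- critical point characterization
  have hcrit : ∀ ℓ ∈ Set.Ioo (0:ℝ) (π/(N:ℝ)), (deriv κ ℓ = 0 ↔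
      3*(1-2*κ₂) + (30*κ₂-5)*(Real.cos ((N:ℝ)*ℓ/2)^2)
        - 28*κ₂*(Real.cos ((N:ℝ)*ℓ/2)^2)^2 = 0) := by
    intro ℓ hℓ
    obtain ⟨hs, hc, _⟩ := hang ℓ hℓ
    have hC : (2*κ₁*Real.cos ((N:ℝ)*ℓ/2)^2) * (-Real.sin ((N:ℝ)*ℓ/2) * ((N:ℝ)/2)) ≠ 0 := by
      have h1 : 0 < 2*κ₁*Real.cos ((N:ℝ)*ℓ/2)^2 := by positivity
      have h2 : -Real.sin ((N:ℝ)*ℓ/2) * ((N:ℝ)/2) < 0 := by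
        have : 0 < Real.sin ((N:ℝ)*ℓ/2) * ((N:ℝ)/2) := by positivity
        linarith
      exact ne_of_lt (mul_neg_of_pos_of_neg h1 h2)
    have heq : deriv κ ℓ = ((2*κ₁*Real.cos ((N:ℝ)*ℓ/2)^2) * (-Real.sin ((N:ℝ)*ℓ/2) * ((N:ℝ)/2)))
        * (3*(1-2*κ₂) + (30*κ₂-5)*(Real.cos ((N:ℝ)*ℓ/2)^2)
          - 28*κ₂*(Real.cos ((N:ℝ)*ℓ/2)^2)^2) := by
      rw [hderiv ℓ]; ring
    rw [heq]
    constructor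
    · intro h
      exact (mul_eq_zero.mp h).resolve_left hC
    · intro h
      rw [h, mul_zero]
  -- existence of a critical point via IVT
  have hGcont : ContinuousOn (fun ℓ : ℝ => 3*(1-2*κ₂) + (30*κ₂-5)*(Real.cos ((N:ℝ)*ℓ/2)^2)
      - 28*κ₂*(Real.cos ((N:ℝ)*ℓ/2)^2)^2) (Set.Icc 0 (π/(N:ℝ))) := by
    apply Continuous.continuousOn
    fun_prop
  have hG0 : (fun ℓ : ℝ => 3*(1-2*κ₂) + (30*κ₂-5)*(Real.cos ((N:ℝ)*ℓ/2)^2)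
      - 28*κ₂*(Real.cos ((N:ℝ)*ℓ/2)^2)^2) 0 < 0 := by
    norm_num; nlinarith
  have hGend : (0:ℝ) < (fun ℓ : ℝ => 3*(1-2*κ₂) + (30*κ₂-5)*(Real.cos ((N:ℝ)*ℓ/2)^2)
      - 28*κ₂*(Real.cos ((N:ℝ)*ℓ/2)^2)^2) (π/(N:ℝ)) := by
    simp only [harg, Real.cos_pi_div_two]
    norm_num; linarith
  obtain ⟨ℓs, hℓsIoo, hGs⟩ := intermediate_value_Ioo hIpos.le hGcont ⟨hG0, hGend⟩
  have hds : deriv κ ℓs = 0 := (hcrit ℓs hℓsIoo).mpr hGs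
  -- uniqueness of the critical point
  have huniq : ∀ ℓ ∈ Set.Ioo (0:ℝ) (π/(N:ℝ)), deriv κ ℓ = 0 → ℓ = ℓs := by
    intro ℓ hℓ hd
    obtain ⟨_, hc, hc1⟩ := hang ℓ hℓ
    obtain ⟨_, hcs, hcs1⟩ := hang ℓs hℓsIoo
    have hGℓ := (hcrit ℓ hℓ).mp hd
    have hveq : Real.cos ((N:ℝ)*ℓ/2)^2 = Real.cos ((N:ℝ)*ℓs/2)^2 := by
      refine quad_unique κ₂ (Real.cos ((N:ℝ)*ℓ/2)^2) (Real.cos ((N:ℝ)*ℓs/2)^2)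
        h2l h2r ?_ ?_ ?_ ?_ ?_ ?_
      · positivity
      · nlinarith
      · positivity
      · nlinarith
      · linarith [hGℓ]
      · linarith [hGs]
    have hfac : (Real.cos ((N:ℝ)*ℓ/2) - Real.cos ((N:ℝ)*ℓs/2)) *
        (Real.cos ((N:ℝ)*ℓ/2) + Real.cos ((N:ℝ)*ℓs/2)) = 0 := by
      linear_combination hveq
    have hcoseq : Real.cos ((N:ℝ)*ℓ/2) = Real.cos ((N:ℝ)*ℓs/2) := by
      rcases mul_eq_zero.mp hfac with h | h
      · linarith
      · linarith
    have hθeq : (N:ℝ)*ℓ/2 = (N:ℝ)*ℓs/2 := by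
      have hπ2 : π/2 ≤ π := by linarith [pi_pos]
      have hm1 : (N:ℝ)*ℓ/2 ∈ Set.Icc 0 π := by
        obtain ⟨hl, hr⟩ := hℓ
        have := (lt_div_iff₀ hNpos).mp hr
        constructor <;> nlinarith
      have hm2 : (N:ℝ)*ℓs/2 ∈ Set.Icc 0 π := by
        obtain ⟨hl, hr⟩ := hℓsIoo
        have := (lt_div_iff₀ hNpos).mp hr
        constructor <;> nlinarith
      exact Real.injOn_cos hm1 hm2 hcoseq
    have : (N:ℝ)*ℓ = (N:ℝ)*ℓs := by linarith
    exact mul_left_cancel₀ hNne this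
  -- maximum analysis
  have hmid : π/(2*(N:ℝ)) ∈ Set.Ioo (0:ℝ) (π/(N:ℝ)) := by
    constructor
    · positivity
    · rw [div_lt_div_iff₀ (by positivity) hNpos]
      nlinarith [pi_pos]
  have hmidIcc : π/(2*(N:ℝ)) ∈ Set.Icc (0:ℝ) (π/(N:ℝ)) := Set.mem_Icc.mpr ⟨hmid.1.le, hmid.2.le⟩
  have hmaxcrit : ∀ ℓ ∈ Set.Icc (0:ℝ) (π/(N:ℝ)), IsMaxOn κ (Set.Icc 0 (π/(N:ℝ))) ℓ →
      ℓ ∈ Set.Ioo (0:ℝ) (π/(N:ℝ)) ∧ deriv κ ℓ = 0 := by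
    intro ℓ hℓ hm
    have hKℓ : 0 < κ ℓ :=
      lt_of_lt_of_le (hpos _ hmid) (isMaxOn_iff.mp hm _ hmidIcc)
    have hne0 : ℓ ≠ 0 := by
      intro h; rw [h, hK0] at hKℓ; exact lt_irrefl 0 hKℓ
    have hneE : ℓ ≠ π/(N:ℝ) := by
      intro h; rw [h, hKend] at hKℓ; exact lt_irrefl 0 hKℓ
    have hIoo : ℓ ∈ Set.Ioo (0:ℝ) (π/(N:ℝ)) :=
      ⟨hℓ.1.lt_of_ne (Ne.symm hne0), hℓ.2.lt_of_ne hneE⟩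
    refine ⟨hIoo, ?_⟩
    have hloc : IsLocalMax κ ℓ := hm.isLocalMax (Icc_mem_nhds hIoo.1 hIoo.2)
    exact hloc.deriv_eq_zero
  obtain ⟨ℓm, hℓm, hmax⟩ := isCompact_Icc.exists_isMaxOn
    (Set.nonempty_Icc.mpr hIpos.le) hcont.continuousOn
  obtain ⟨hℓmIoo, hdm⟩ := hmaxcrit ℓm hℓm hmax
  have hms : ℓm = ℓs := huniq ℓm hℓmIoo hdm
  refine ⟨hK0, hKend, hpos, ℓs, hℓsIoo, hds, huniq, hms ▸ hmax, ?_⟩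
  intro ℓ hℓ hm
  obtain ⟨hIoo, hd⟩ := hmaxcrit ℓ hℓ hm
  exact huniq ℓ hIoo hd
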